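/- Let m ≥ 1. The quotient topological space of D^m × [0,1] by the equivalence relation generated by (i) (y,t) ~ (y,t') for all y ∈ D^m with ‖y‖ = 1 and all t,t' ∈ [0,1], and (ii) (x,1) ~ (x,0) for all x ∈ D^m, is homeomorphic to the unit sphere S^{m+1} in EuclideanSpace ℝ (Fin (m+2)). -/

import Mathlib

open Metric unitInterval

noncomputable section

/-- The closed unit ball (disk) in `EuclideanSpace ℝ (Fin m)`. -/
def Disk (m : ℕ) : Set (EuclideanSpace ℝ (Fin m)) := Metric.closedBall 0 1

/-- The unit sphere of dimension `m` in `EuclideanSpace ℝ (Fin (m+1))`. -/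
def Sph (m : ℕ) : Set (EuclideanSpace ℝ (Fin (m + 1))) := Metric.sphere 0 1

/-- The relation generating the open book quotient on the `m`-disk page with trivial
monodromy: `(y,t) ~ (y,t')` for `‖y‖ = 1` and `(x,1) ~ (x,0)` for all `x`. -/
def obRel (m : ℕ) (p q : ↥(Disk m) × I) : Prop :=
  (p.1 = q.1 ∧ ‖(p.1 : EuclideanSpace ℝ (Fin m))‖ = 1) ∨
  (p.1 = q.1 ∧ p.2 = 1 ∧ q.2 = 0)

open Real

private def pg (m : ℕ) (p : ↥(Disk m) × I) : Fin (m + 2) → ℝ :=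
  Fin.snoc (Fin.snoc (fun j => (p.1 : EuclideanSpace ℝ (Fin m)) j)
    (Real.sqrt (1 - ‖(p.1 : EuclideanSpace ℝ (Fin m))‖ ^ 2) * Real.cos (2 * π * p.2)))
    (Real.sqrt (1 - ‖(p.1 : EuclideanSpace ℝ (Fin m))‖ ^ 2) * Real.sin (2 * π * p.2))

private lemma sum_snoc_sq (m : ℕ) (x : Fin m → ℝ) (a b : ℝ) :
    ∑ i, (Fin.snoc (Fin.snoc x a) b : Fin (m+2) → ℝ) i ^ 2 = (∑ j, x j ^ 2) + a^2 + b^2 := by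
  rw [Fin.sum_univ_castSucc]
  simp only [Fin.snoc_castSucc, Fin.snoc_last]
  rw [Fin.sum_univ_castSucc]
  simp only [Fin.snoc_castSucc, Fin.snoc_last]

private lemma euclid_sum_sq {n : ℕ} (x : EuclideanSpace ℝ (Fin n)) :
    ∑ i, x i ^ 2 = ‖x‖ ^ 2 := by
  rw [EuclideanSpace.norm_eq, Real.sq_sqrt (by positivity)]
  simp [Real.norm_eq_abs, sq_abs]

private lemma pg_norm (m : ℕ) (p : ↥(Disk m) × I) :
    ∑ i, pg m p i ^ 2 = 1 := by
  have hx : ‖(p.1 : EuclideanSpace ℝ (Fin m))‖ ≤ 1 := by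
    exact mem_closedBall_zero_iff.1 p.1.2
  have h0 : (0:ℝ) ≤ 1 - ‖(p.1 : EuclideanSpace ℝ (Fin m))‖ ^ 2 := by nlinarith [norm_nonneg (p.1 : EuclideanSpace ℝ (Fin m))]
  have hs := Real.sq_sqrt h0
  have hsc := Real.sin_sq_add_cos_sq (2 * π * (p.2 : ℝ))
  rw [pg, sum_snoc_sq]
  have hxx : ∑ j, (p.1 : EuclideanSpace ℝ (Fin m)) j ^ 2 = ‖(p.1 : EuclideanSpace ℝ (Fin m))‖^2 :=
    euclid_sum_sq _
  rw [hxx]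
  nlinarith [hs, hsc]

private lemma pg_mem (m : ℕ) (p : ↥(Disk m) × I) :
    ((EuclideanSpace.equiv (Fin (m+2)) ℝ).symm (pg m p) : EuclideanSpace ℝ (Fin (m+2))) ∈ Sph (m+1) := by
  rw [Sph, mem_sphere_zero_iff_norm, EuclideanSpace.norm_eq]
  have : ∀ i, ‖((EuclideanSpace.equiv (Fin (m+2)) ℝ).symm (pg m p)) i‖ ^ 2 = pg m p i ^ 2 := by
    intro i; rw [Real.norm_eq_abs, sq_abs]; rfl
  rw [Finset.sum_congr rfl (fun i _ => this i), pg_norm]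
  exact Real.sqrt_one

private def obS (m : ℕ) (p : ↥(Disk m) × I) : ↥(Sph (m+1)) :=
  ⟨(EuclideanSpace.equiv (Fin (m+2)) ℝ).symm (pg m p), pg_mem m p⟩

private lemma obS_cont (m : ℕ) : Continuous (obS m) := by
  apply Continuous.subtype_mk
  apply ((EuclideanSpace.equiv (Fin (m+2)) ℝ).symm : (Fin (m+2) → ℝ) ≃L[ℝ] _).continuous.comp
  apply continuous_pi
  intro i
  have hx : Continuous fun p : ↥(Disk m) × I => (p.1 : EuclideanSpace ℝ (Fin m)) := by
    fun_prop
  have hr : Continuous fun p : ↥(Disk m) × I =>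
      Real.sqrt (1 - ‖(p.1 : EuclideanSpace ℝ (Fin m))‖ ^ 2) := by fun_prop
  have ht : Continuous fun p : ↥(Disk m) × I => (2 * π * (p.2 : ℝ)) := by fun_prop
  refine Fin.lastCases ?_ (fun i => ?_) i
  · simp only [pg, Fin.snoc_last]
    exact hr.mul (Real.continuous_sin.comp ht)
  · refine Fin.lastCases ?_ (fun j => ?_) i
    · simp only [pg, Fin.snoc_castSucc, Fin.snoc_last]
      exact hr.mul (Real.continuous_cos.comp ht)
    · simp only [pg, Fin.snoc_castSucc]
      exact ((EuclideanSpace.proj j : EuclideanSpace ℝ (Fin m) →L[ℝ] ℝ).continuous).comp hx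


private lemma exists_angle (a b : ℝ) (h : a ^ 2 + b ^ 2 = 1) :
    ∃ θ ∈ Set.Icc (0:ℝ) (2 * π), Real.cos θ = a ∧ Real.sin θ = b := by
  have hpi := Real.pi_pos
  have ha1 : (-1:ℝ) ≤ a := by nlinarith
  have ha2 : a ≤ 1 := by nlinarith
  have hac := Real.cos_arccos ha1 ha2
  have has : Real.sin (Real.arccos a) = Real.sqrt (1 - a ^ 2) := Real.sin_arccos a
  have habs : Real.sqrt (1 - a ^ 2) = |b| := by
    rw [show (1:ℝ) - a ^ 2 = b ^ 2 by linarith, Real.sqrt_sq_eq_abs]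
  have h1 := Real.arccos_nonneg a
  have h2 := Real.arccos_le_pi a
  rcases le_or_gt 0 b with hb | hb
  · exact ⟨Real.arccos a, ⟨h1, by linarith⟩, hac,
      by rw [has, habs, abs_of_nonneg hb]⟩
  · refine ⟨2 * π - Real.arccos a, ⟨by linarith, by linarith⟩, ?_, ?_⟩
    · rw [Real.cos_two_pi_sub]; exact hac
    · rw [Real.sin_two_pi_sub, has, habs, abs_of_neg hb]; ring

private lemma angle_inj {θ ψ : ℝ} (hθ : θ ∈ Set.Icc (0:ℝ) (2*π))
    (hψ : ψ ∈ Set.Icc (0:ℝ) (2*π))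
    (hc : Real.cos θ = Real.cos ψ) (hs : Real.sin θ = Real.sin ψ) :
    θ = ψ ∨ (θ = 0 ∧ ψ = 2*π) ∨ (θ = 2*π ∧ ψ = 0) := by
  have hpi := Real.pi_pos
  obtain ⟨k, hk⟩ := Real.Angle.angle_eq_iff_two_pi_dvd_sub.1 (Real.Angle.cos_sin_inj hc hs)
  obtain ⟨hθ1, hθ2⟩ := hθ; obtain ⟨hψ1, hψ2⟩ := hψ
  have hk1 : (k:ℝ) ≤ 1 := by nlinarith
  have hk2 : (-1:ℝ) ≤ (k:ℝ) := by nlinarith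
  have hk1' : k ≤ 1 := by exact_mod_cast hk1
  have hk2' : (-1:ℤ) ≤ k := by exact_mod_cast hk2
  interval_cases k
  · right; left
    simp only [Int.cast_neg, Int.cast_one, mul_neg_one] at hk
    constructor <;> linarith
  · left
    simp only [Int.cast_zero, mul_zero] at hk
    linarith
  · right; right
    simp only [Int.cast_one, mul_one] at hk
    constructor <;> linarith

private lemma obS_rel (m : ℕ) (p q : ↥(Disk m) × I) (h : obRel m p q) :
    obS m p = obS m q := by
  suffices h' : pg m p = pg m q from Subtype.ext (congrArg (EuclideanSpace.equiv (Fin (m+2)) ℝ).symm h')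
  rcases h with ⟨h1, h2⟩ | ⟨h1, h2, h3⟩
  · have hz : Real.sqrt (1 - ‖(p.1 : EuclideanSpace ℝ (Fin m))‖ ^ 2) = 0 := by
      rw [h2]; norm_num
    have hz' : Real.sqrt (1 - ‖(q.1 : EuclideanSpace ℝ (Fin m))‖ ^ 2) = 0 := by
      rw [← h1, h2]; norm_num
    simp only [pg, h1, hz, hz', zero_mul]
  · simp only [pg, h1, h2, h3, Set.Icc.coe_one, Set.Icc.coe_zero, mul_one, mul_zero,
      Real.cos_two_pi, Real.sin_two_pi, Real.cos_zero, Real.sin_zero]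

private lemma obS_inj (m : ℕ) (p q : ↥(Disk m) × I) (h : obS m p = obS m q) :
    Quot.mk (obRel m) p = Quot.mk (obRel m) q := by
  have hpi := Real.pi_pos
  have hpg : pg m p = pg m q := by
    have := Subtype.ext_iff.1 h
    exact (EuclideanSpace.equiv (Fin (m+2)) ℝ).symm.injective this
  -- first coordinates agree
  have hx : p.1 = q.1 := by
    apply Subtype.ext
    ext j
    have := congrFun hpg (j.castSucc.castSucc)
    simpa only [pg, Fin.snoc_castSucc] using this
  set x := (p.1 : EuclideanSpace ℝ (Fin m)) with hxdef
  have hxq : (q.1 : EuclideanSpace ℝ (Fin m)) = x := by rw [← hx]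
  have ha : Real.sqrt (1 - ‖x‖ ^ 2) * Real.cos (2 * π * (p.2:ℝ))
      = Real.sqrt (1 - ‖x‖ ^ 2) * Real.cos (2 * π * (q.2:ℝ)) := by
    have := congrFun hpg ((Fin.last m).castSucc)
    simpa only [pg, Fin.snoc_castSucc, Fin.snoc_last, hxq] using this
  have hb : Real.sqrt (1 - ‖x‖ ^ 2) * Real.sin (2 * π * (p.2:ℝ))
      = Real.sqrt (1 - ‖x‖ ^ 2) * Real.sin (2 * π * (q.2:ℝ)) := by
    have := congrFun hpg (Fin.last (m+1))
    simpa only [pg, Fin.snoc_last, hxq] using this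
  rcases eq_or_lt_of_le (mem_closedBall_zero_iff.1 p.1.2) with hn | hn
  · exact Quot.sound (Or.inl ⟨hx, hn⟩)
  · have hr : 0 < Real.sqrt (1 - ‖x‖ ^ 2) := by
      apply Real.sqrt_pos.2
      nlinarith [norm_nonneg x]
    have hc := mul_left_cancel₀ hr.ne' ha
    have hs := mul_left_cancel₀ hr.ne' hb
    have hmemp : 2 * π * (p.2:ℝ) ∈ Set.Icc (0:ℝ) (2*π) := by
      constructor
      · nlinarith [p.2.2.1]
      · nlinarith [p.2.2.2]
    have hmemq : 2 * π * (q.2:ℝ) ∈ Set.Icc (0:ℝ) (2*π) := by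
      constructor
      · nlinarith [q.2.2.1]
      · nlinarith [q.2.2.2]
    have h2pi : (2 * π : ℝ) ≠ 0 := by positivity
    rcases angle_inj hmemp hmemq hc hs with heq | ⟨h1, h2⟩ | ⟨h1, h2⟩
    · have : p.2 = q.2 := by
        apply Subtype.ext
        exact mul_left_cancel₀ h2pi heq
      rw [show p = q from Prod.ext hx this]
    · have hp0 : p.2 = 0 := by
        apply Subtype.ext
        have : 2 * π * (p.2:ℝ) = 2 * π * 0 := by rw [h1]; ring
        simpa using mul_left_cancel₀ h2pi this
      have hq1 : q.2 = 1 := by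
        apply Subtype.ext
        have : 2 * π * (q.2:ℝ) = 2 * π * 1 := by rw [h2]; ring
        simpa using mul_left_cancel₀ h2pi this
      exact (Quot.sound (r := obRel m) (Or.inr ⟨hx.symm, hq1, hp0⟩)).symm
    · have hp1 : p.2 = 1 := by
        apply Subtype.ext
        have : 2 * π * (p.2:ℝ) = 2 * π * 1 := by rw [h1]; ring
        simpa using mul_left_cancel₀ h2pi this
      have hq0 : q.2 = 0 := by
        apply Subtype.ext
        have : 2 * π * (q.2:ℝ) = 2 * π * 0 := by rw [h2]; ring
        simpa using mul_left_cancel₀ h2pi this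
      exact Quot.sound (Or.inr ⟨hx, hp1, hq0⟩)
private lemma obS_surj (m : ℕ) : Function.Surjective (obS m) := by
  rintro ⟨y, hy⟩
  have hpi := Real.pi_pos
  have hy1 : ‖y‖ = 1 := mem_sphere_zero_iff_norm.1 hy
  set a : ℝ := y ((Fin.last m).castSucc) with hadef
  set b : ℝ := y (Fin.last (m+1)) with hbdef
  set x : EuclideanSpace ℝ (Fin m) :=
    (EuclideanSpace.equiv (Fin m) ℝ).symm (fun j => y (j.castSucc.castSucc)) with hxdef
  have hxj : ∀ j, x j = y (j.castSucc.castSucc) := fun j => rfl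
  have h2 : ∑ i, y i ^ 2 = (∑ j : Fin m, y (j.castSucc.castSucc) ^ 2) + a ^ 2 + b ^ 2 := by
    rw [Fin.sum_univ_castSucc, Fin.sum_univ_castSucc]
  have h1 : ∑ i, y i ^ 2 = 1 := by
    rw [euclid_sum_sq y, hy1, one_pow]
  have hxsum : ∑ j, x j ^ 2 = ∑ j : Fin m, y (j.castSucc.castSucc) ^ 2 :=
    Finset.sum_congr rfl (fun j _ => by rw [hxj])
  have hxs : ‖x‖ ^ 2 = 1 - a ^ 2 - b ^ 2 := by
    rw [← euclid_sum_sq x, hxsum]; linarith [h2, h1]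
  have hxle : ‖x‖ ≤ 1 := by nlinarith [norm_nonneg x, sq_nonneg a, sq_nonneg b]
  have hxD : x ∈ Disk m := mem_closedBall_zero_iff.2 hxle
  have hab : 1 - ‖x‖ ^ 2 = a ^ 2 + b ^ 2 := by linarith
  set r : ℝ := Real.sqrt (1 - ‖x‖ ^ 2) with hrdef
  have hr2 : r ^ 2 = a ^ 2 + b ^ 2 := by
    rw [hrdef, Real.sq_sqrt (by nlinarith [sq_nonneg a, sq_nonneg b])]; exact hab
  rcases eq_or_ne r 0 with hr0 | hr0
  · have ha0 : a = 0 := by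
      have : a ^ 2 = 0 := by nlinarith [sq_nonneg a, sq_nonneg b]
      exact pow_eq_zero_iff two_ne_zero |>.1 this
    have hb0 : b = 0 := by
      have : b ^ 2 = 0 := by nlinarith [sq_nonneg a, sq_nonneg b]
      exact pow_eq_zero_iff two_ne_zero |>.1 this
    refine ⟨⟨⟨x, hxD⟩, 0⟩, ?_⟩
    apply Subtype.ext
    apply (EuclideanSpace.equiv (Fin (m+2)) ℝ).symm_apply_eq.2
    funext i
    refine Fin.lastCases ?_ (fun i => ?_) i
    · show pg m _ (Fin.last (m+1)) = y (Fin.last (m+1))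
      simp only [pg, Fin.snoc_last]
      rw [show ((0:I):ℝ) = 0 from rfl, mul_zero, Real.sin_zero, mul_zero, ← hbdef, hb0]
    · refine Fin.lastCases ?_ (fun j => ?_) i
      · show pg m _ ((Fin.last m).castSucc) = y ((Fin.last m).castSucc)
        simp only [pg, Fin.snoc_castSucc, Fin.snoc_last]
        rw [show ((0:I):ℝ) = 0 from rfl, mul_zero, Real.cos_zero, mul_one, ← hadef, ha0,
          ← hrdef, hr0]
      · show pg m _ (j.castSucc.castSucc) = y (j.castSucc.castSucc)
        simp only [pg, Fin.snoc_castSucc]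
        exact hxj j
  · have hrpos : 0 < r := lt_of_le_of_ne (Real.sqrt_nonneg _) (Ne.symm hr0)
    obtain ⟨θ, hθmem, hcθ, hsθ⟩ := exists_angle (a / r) (b / r) (by
      field_simp
      linarith [hr2])
    have ht0 : 0 ≤ θ / (2 * π) := div_nonneg hθmem.1 (by positivity)
    have ht1 : θ / (2 * π) ≤ 1 := (div_le_one (by positivity)).2 hθmem.2
    refine ⟨⟨⟨x, hxD⟩, ⟨θ / (2 * π), ht0, ht1⟩⟩, ?_⟩
    apply Subtype.ext
    apply (EuclideanSpace.equiv (Fin (m+2)) ℝ).symm_apply_eq.2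
    have hθt : 2 * π * ((⟨θ / (2 * π), ht0, ht1⟩ : I) : ℝ) = θ := by
      show 2 * π * (θ / (2 * π)) = θ
      field_simp
    funext i
    refine Fin.lastCases ?_ (fun i => ?_) i
    · show pg m _ (Fin.last (m+1)) = y (Fin.last (m+1))
      simp only [pg, Fin.snoc_last]
      rw [hθt, hsθ, ← hrdef, mul_div_cancel₀ _ hr0]
    · refine Fin.lastCases ?_ (fun j => ?_) i
      · show pg m _ ((Fin.last m).castSucc) = y ((Fin.last m).castSucc)
        simp only [pg, Fin.snoc_castSucc, Fin.snoc_last]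
        rw [hθt, hcθ, ← hrdef, mul_div_cancel₀ _ hr0]
      · show pg m _ (j.castSucc.castSucc) = y (j.castSucc.castSucc)
        simp only [pg, Fin.snoc_castSucc]
        exact hxj j

/-- The open book with page the `m`-disk and trivial monodromy is the sphere `S^{m+1}`. -/
theorem openBook_disk_id_homeomorph_sphere (m : ℕ) (hm : 1 ≤ m) :
    Nonempty (Quot (obRel m) ≃ₜ ↥(Sph (m + 1))) := by
  let F : Quot (obRel m) → ↥(Sph (m+1)) := Quot.lift (obS m) (fun p q h => obS_rel m p q h)
  have hFcont : Continuous F := continuous_quot_lift _ (obS_cont m)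
  have hFbij : Function.Bijective F := by
    constructor
    · intro u v
      induction u using Quot.ind
      induction v using Quot.ind
      exact obS_inj m _ _
    · intro y
      obtain ⟨p, hp⟩ := obS_surj m y
      exact ⟨Quot.mk _ p, hp⟩
  haveI : CompactSpace ↥(Disk m) := isCompact_iff_compactSpace.1 (isCompact_closedBall 0 1)
  exact ⟨Continuous.homeoOfEquivCompactToT2 (f := Equiv.ofBijective F hFbij) hFcont⟩
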